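/- Let k be a perfect field of characteristic p and W(k) its ring of Witt vectors. Let M be a finite free W(k)-module equipped with a Frobenius-semilinear endomorphism φ (semilinear over the Witt vector Frobenius). Then M decomposes as a direct sum M = M_unit ⊕ M_nil of φ-stable submodules, where φ is bijective on M_unit and topologically nilpotent on M_nil (i.e. φ^k(M_nil) → 0 p-adically as k → ∞). -/

import Mathlib

open WittVector Function

section WittLemmas

variable {p : ℕ} [hp : Fact p.Prime] {k : Type} [Field k] [CharP k p] [PerfectRing k p]

theorem WF_frob_iter_versch (w : WittVector p k) (n : ℕ) :
    frobenius (verschiebung^[n] w) = verschiebung^[n] (frobenius w) := by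
  induction n with
  | zero => rfl
  | succ n ih =>
    rw [iterate_succ_apply', (verschiebung_frobenius_comm _).symm, ih, iterate_succ_apply']

theorem WF_pow_p_mul (y : WittVector p k) (n : ℕ) :
    (p : WittVector p k) ^ n * y = verschiebung^[n] (frobenius^[n] y) := by
  induction n with
  | zero => simp
  | succ n ih =>
    have h1 : (p : WittVector p k) ^ (n + 1) * y = ((p : WittVector p k) ^ n * y) * p := by ring
    rw [h1, ih, ← verschiebung_frobenius, WF_frob_iter_versch, iterate_succ_apply',
      iterate_succ_apply']

theorem WF_coeff_iterate_verschiebung_lt (x : WittVector p k) :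
    ∀ {n i : ℕ}, i < n → (verschiebung^[n] x).coeff i = 0 := by
  intro n
  induction n with
  | zero => omega
  | succ n ih =>
    intro i hi
    rw [iterate_succ_apply']
    cases i with
    | zero => exact verschiebung_coeff_zero _
    | succ i => rw [verschiebung_coeff_succ]; exact ih (by omega)

theorem WF_mem_span_p_pow {x : WittVector p k} {n : ℕ} :
    x ∈ Ideal.span {(p : WittVector p k)} ^ n ↔ ∀ i < n, x.coeff i = 0 := by
  rw [Ideal.span_singleton_pow, Ideal.mem_span_singleton]
  constructor
  · rintro ⟨y, rfl⟩ i hi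
    rw [WF_pow_p_mul]
    exact WF_coeff_iterate_verschiebung_lt _ hi
  · intro h
    set w : WittVector p k := (⇑(frobeniusEquiv p k).symm)^[n] (x.shift n) with hw
    refine ⟨w, ?_⟩
    have hfw : frobenius^[n] w = x.shift n := by
      have hli : Function.LeftInverse (frobenius : WittVector p k → WittVector p k)
          ⇑(frobeniusEquiv p k).symm := fun a => (frobeniusEquiv p k).apply_symm_apply a
      exact hli.iterate n (x.shift n)
    rw [WF_pow_p_mul, hfw, ← WittVector.eq_iterate_verschiebung h]

theorem WF_span_p_pow_eq_ker (n : ℕ) :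
    Ideal.span {(p : WittVector p k)} ^ n = RingHom.ker (truncate (p := p) (R := k) n) := by
  ext x
  rw [WF_mem_span_p_pow, WittVector.mem_ker_truncate]

end WittLemmas

open WittVector Function

set_option linter.unusedSectionVars false
set_option maxHeartbeats 1000000

section ModLemmas

variable {p : ℕ} [hp : Fact p.Prime] {k : Type} [Field k] [CharP k p] [PerfectRing k p]
variable {M : Type} [AddCommGroup M] [Module (WittVector p k) M]

local notation "W" => WittVector p k

open Pointwise in
theorem submod_mem_smul_iff {R M' : Type*} [CommRing R] [AddCommGroup M'] [Module R M']
    (a : R) (S : Submodule R M') {x : M'} : x ∈ a • S ↔ ∃ y ∈ S, a • y = x := by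
  rw [← SetLike.mem_coe, Submodule.coe_pointwise_smul]
  exact Set.mem_smul_set

/-- `p^n M` -/
noncomputable def QQ (p : ℕ) [Fact p.Prime] (k : Type) [Field k] [CharP k p]
    (M : Type) [AddCommGroup M] [Module (WittVector p k) M] (n : ℕ) :
    Submodule (WittVector p k) M :=
  Ideal.span {(p : WittVector p k)} ^ n • ⊤

theorem QQ_mem_iff {n : ℕ} {x : M} :
    x ∈ QQ p k M n ↔ ∃ y, x = (p : W) ^ n • y := by
  unfold QQ
  rw [Ideal.span_singleton_pow, Submodule.ideal_span_singleton_smul, submod_mem_smul_iff]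
  constructor
  · rintro ⟨y, -, rfl⟩
    exact ⟨y, rfl⟩
  · rintro ⟨y, rfl⟩
    exact ⟨y, trivial, rfl⟩

theorem QQ_antitone {m n : ℕ} (h : m ≤ n) : QQ p k M n ≤ QQ p k M m :=
  Submodule.smul_mono_left (Ideal.pow_le_pow_right h)

theorem QQ_smul_mem {n : ℕ} (c : W) {x : M} (hx : x ∈ QQ p k M n) : c • x ∈ QQ p k M n :=
  Submodule.smul_mem _ c hx

theorem QQ_repr_mem_iff {ι : Type*} [Fintype ι] (b : Module.Basis ι W M) {n : ℕ} {x : M} :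
    x ∈ QQ p k M n ↔ ∀ i, b.repr x i ∈ Ideal.span {(p : W)} ^ n := by
  simp_rw [Ideal.span_singleton_pow, Ideal.mem_span_singleton]
  rw [QQ_mem_iff]
  constructor
  · rintro ⟨y, rfl⟩ i
    rw [map_smul, Finsupp.smul_apply, smul_eq_mul]
    exact Dvd.intro _ rfl
  · intro h
    choose c hc using h
    refine ⟨∑ i, c i • b i, ?_⟩
    conv_lhs => rw [← b.sum_repr x]
    rw [Finset.smul_sum]
    refine Finset.sum_congr rfl fun i _ => ?_
    rw [hc i, smul_smul]

theorem WF_exists_limit {ι : Type*} [Fintype ι] (b : Module.Basis ι W M) (f : ℕ → M)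
    (hf : ∀ j ℓ, j ≤ ℓ → f ℓ - f j ∈ QQ p k M j) :
    ∃ L : M, ∀ j, L - f j ∈ QQ p k M j := by
  classical
  -- coordinates
  set c : ι → ℕ → W := fun i j => b.repr (f j) i with hc
  have hcc : ∀ i, ∀ j ℓ, j ≤ ℓ → truncate j (c i ℓ) = truncate j (c i j) := by
    intro i j ℓ hjl
    have h1 : c i ℓ - c i j ∈ Ideal.span {(p : W)} ^ j := by
      have := (QQ_repr_mem_iff b).mp (hf j ℓ hjl) i
      rwa [map_sub, Finsupp.sub_apply] at this
    rw [WF_span_p_pow_eq_ker] at h1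
    rw [RingHom.mem_ker, map_sub, sub_eq_zero] at h1
    exact h1
  set g : ι → W := fun i => WittVector.mk p (fun m => (c i (m + 1)).coeff m) with hg
  have hgc : ∀ i j, g i - c i j ∈ Ideal.span {(p : W)} ^ j := by
    intro i j
    rw [WF_span_p_pow_eq_ker, RingHom.mem_ker, map_sub, sub_eq_zero]
    apply TruncatedWittVector.ext
    intro m
    rw [WittVector.coeff_truncate, WittVector.coeff_truncate]
    have hm : (m : ℕ) < j := m.2
    have e1 : (c i (m + 1)).coeff m = (c i (max (m + 1) j)).coeff m := by
      have := hcc i (m + 1) (max (m + 1) j) (le_max_left _ _)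
      have := congrArg (fun z => TruncatedWittVector.coeff ⟨m, Nat.lt_succ_self m⟩ z) this
      simpa [WittVector.coeff_truncate] using this.symm
    have e2 : (c i j).coeff m = (c i (max (m + 1) j)).coeff m := by
      have := hcc i j (max (m + 1) j) (le_max_right _ _)
      have := congrArg (fun z => TruncatedWittVector.coeff ⟨(m : ℕ), hm⟩ z) this
      simpa [WittVector.coeff_truncate] using this.symm
    show (c i ((m : ℕ) + 1)).coeff m = (c i j).coeff m
    rw [e1, e2]
  refine ⟨∑ i, g i • b i, fun j => ?_⟩
  rw [QQ_repr_mem_iff b]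
  intro i
  rw [map_sub, Finsupp.sub_apply]
  have hrepr : b.repr (∑ i, g i • b i) i = g i := by
    simp [Finsupp.single_apply, Module.Basis.repr_self]
  rw [hrepr]
  exact hgc i j

end ModLemmas
section Phi

variable {p : ℕ} [hp : Fact p.Prime] {k : Type} [Field k] [CharP k p] [PerfectRing k p]
variable {M : Type} [AddCommGroup M] [Module (WittVector p k) M]

local notation "W" => WittVector p k

variable (φ : M →ₛₗ[(WittVector.frobenius : WittVector p k →+* WittVector p k)] M)

theorem phi_iter_add (j : ℕ) (x y : M) : (⇑φ)^[j] (x + y) = (⇑φ)^[j] x + (⇑φ)^[j] y := by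
  induction j generalizing x y with
  | zero => rfl
  | succ j ih => rw [iterate_succ_apply, map_add, ih, ← iterate_succ_apply, ← iterate_succ_apply]

theorem phi_iter_zero (j : ℕ) : (⇑φ)^[j] (0 : M) = 0 := by
  induction j with
  | zero => rfl
  | succ j ih => rw [iterate_succ_apply, map_zero, ih]

theorem phi_iter_sub (j : ℕ) (x y : M) : (⇑φ)^[j] (x - y) = (⇑φ)^[j] x - (⇑φ)^[j] y := by
  induction j generalizing x y with
  | zero => rfl
  | succ j ih => rw [iterate_succ_apply, map_sub, ih, ← iterate_succ_apply, ← iterate_succ_apply]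

theorem phi_iter_smul (j : ℕ) (c : W) (x : M) :
    (⇑φ)^[j] (c • x) = (⇑(frobenius : W →+* W))^[j] c • (⇑φ)^[j] x := by
  induction j generalizing c x with
  | zero => rfl
  | succ j ih =>
    rw [iterate_succ_apply (⇑φ), φ.map_smulₛₗ, ih, ← iterate_succ_apply (⇑φ), ← iterate_succ_apply]

theorem frob_iter_p_pow (j n : ℕ) :
    (⇑(frobenius : W →+* W))^[j] ((p : W) ^ n) = (p : W) ^ n := by
  induction j with
  | zero => rfl
  | succ j ih => rw [iterate_succ_apply, map_pow, map_natCast, ih]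

theorem phi_iter_QQ (j n : ℕ) {x : M} (hx : x ∈ QQ p k M n) : (⇑φ)^[j] x ∈ QQ p k M n := by
  obtain ⟨y, rfl⟩ := QQ_mem_iff.mp hx
  rw [phi_iter_smul, frob_iter_p_pow]
  exact QQ_mem_iff.mpr ⟨_, rfl⟩

/-- `{x | φ^[j] x ∈ p^n M}` -/
noncomputable def KerN (n j : ℕ) : Submodule W M where
  carrier := {x | (⇑φ)^[j] x ∈ QQ p k M n}
  add_mem' := by
    intro a b ha hb
    simp only [Set.mem_setOf_eq, phi_iter_add] at *
    exact Submodule.add_mem _ ha hb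
  zero_mem' := by
    simp only [Set.mem_setOf_eq, phi_iter_zero]
    exact Submodule.zero_mem _
  smul_mem' := by
    intro c x hx
    simp only [Set.mem_setOf_eq, phi_iter_smul] at *
    exact QQ_smul_mem _ hx

/-- `φ^[j](M) + p^n M` -/
noncomputable def ImN (n j : ℕ) : Submodule W M where
  carrier := {x | ∃ y, x - (⇑φ)^[j] y ∈ QQ p k M n}
  add_mem' := by
    rintro a b ⟨ya, ha⟩ ⟨yb, hb⟩
    refine ⟨ya + yb, ?_⟩
    rw [phi_iter_add]
    have : a + b - ((⇑φ)^[j] ya + (⇑φ)^[j] yb) = (a - (⇑φ)^[j] ya) + (b - (⇑φ)^[j] yb) := by abel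
    rw [this]
    exact Submodule.add_mem _ ha hb
  zero_mem' := ⟨0, by rw [phi_iter_zero, sub_zero]; exact Submodule.zero_mem _⟩
  smul_mem' := by
    rintro c x ⟨y, hy⟩
    refine ⟨(⇑(frobeniusEquiv p k).symm)^[j] c • y, ?_⟩
    rw [phi_iter_smul]
    have hc : (⇑(frobenius : W →+* W))^[j] ((⇑(frobeniusEquiv p k).symm)^[j] c) = c := by
      have hli : Function.LeftInverse (frobenius : W → W) ⇑(frobeniusEquiv p k).symm :=
        fun a => (frobeniusEquiv p k).apply_symm_apply a
      exact hli.iterate j c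
    rw [hc, ← smul_sub]
    exact QQ_smul_mem _ hy

end Phi
section Stab

variable {p : ℕ} [hp : Fact p.Prime] {k : Type} [Field k] [CharP k p] [PerfectRing k p]
variable {M : Type} [AddCommGroup M] [Module (WittVector p k) M]
  [Module.Finite (WittVector p k) M]

local notation "W" => WittVector p k

theorem WF_p_ne_zero : (p : W) ≠ 0 := (WittVector.irreducible p).ne_zero

theorem isArtinianRing_quot (n : ℕ) :
    IsArtinianRing (W ⧸ (Ideal.span {(p : W)} ^ n)) := by
  classical
  haveI dvr : IsDiscreteValuationRing W := WittVector.isDiscreteValuationRing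
  set I : Ideal W := Ideal.span {(p : W)} ^ n with hI
  have hpn : (p : W) ^ n ∈ I := by
    rw [hI, Ideal.span_singleton_pow]
    exact Ideal.mem_span_singleton_self _
  have hchar : ∀ J : Ideal (W ⧸ I), ∃ j : Fin (n + 1),
      J = Ideal.map (Ideal.Quotient.mk I) (Ideal.span {(p : W) ^ (j : ℕ)}) := by
    intro J
    have hsurj : Function.Surjective (Ideal.Quotient.mk I) := Ideal.Quotient.mk_surjective
    have hcomap : Ideal.map (Ideal.Quotient.mk I) (Ideal.comap (Ideal.Quotient.mk I) J) = J :=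
      Ideal.map_comap_of_surjective _ hsurj J
    have hIle : I ≤ Ideal.comap (Ideal.Quotient.mk I) J := by
      intro a ha
      have : Ideal.Quotient.mk I a = 0 := Ideal.Quotient.eq_zero_iff_mem.mpr ha
      simp [Ideal.mem_comap, this]
    have hne : Ideal.comap (Ideal.Quotient.mk I) J ≠ ⊥ := by
      intro h
      have h2 := hIle hpn
      rw [h, Submodule.mem_bot] at h2
      exact pow_ne_zero n WF_p_ne_zero h2
    obtain ⟨j, hj⟩ :=
      IsDiscreteValuationRing.ideal_eq_span_pow_irreducible hne (WittVector.irreducible p)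
    have hjn : j ≤ n := by
      by_contra hgt
      push_neg at hgt
      have hdvd : (p : W) ^ j ∣ (p : W) ^ n := by
        have h2 := hIle hpn
        rw [hj, Ideal.mem_span_singleton] at h2
        exact h2
      obtain ⟨c, hc⟩ := hdvd
      have hj' : (p : W) ^ j = (p : W) ^ n * (p : W) ^ (j - n) := by
        rw [← pow_add, Nat.add_sub_cancel' (le_of_lt hgt)]
      have hone : (1 : W) = (p : W) ^ (j - n) * c := by
        apply mul_left_cancel₀ (pow_ne_zero n WF_p_ne_zero)
        rw [mul_one, ← mul_assoc, ← hj', ← hc]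
      have hu : IsUnit ((p : W)) := by
        apply IsUnit.of_mul_eq_one (a := (p : W)) ((p : W) ^ (j - n - 1) * c)
        have hjn1 : j - n = (j - n - 1) + 1 := by omega
        rw [← mul_assoc, ← pow_succ', ← hjn1, ← hone]
      exact (WittVector.irreducible p).not_isUnit hu
    refine ⟨⟨j, Nat.lt_succ_of_le hjn⟩, ?_⟩
    rw [← hcomap, hj]
  have hfin : Finite (Ideal (W ⧸ I)) := by
    have hs : Function.Surjective (fun j : Fin (n + 1) =>
        Ideal.map (Ideal.Quotient.mk I) (Ideal.span {(p : W) ^ (j : ℕ)})) := by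
      intro J
      obtain ⟨j, hj⟩ := hchar J
      exact ⟨j, hj.symm⟩
    exact Finite.of_surjective _ hs
  haveI : Finite (Submodule (W ⧸ I) (W ⧸ I)) := hfin
  exact Finite.to_wellFoundedLT

theorem kerchain_stabilizes (f : ℕ → Submodule W M) (hmono : Monotone f) :
    ∃ J, ∀ j, J ≤ j → f j = f J := by
  haveI dvr : IsDiscreteValuationRing W := WittVector.isDiscreteValuationRing
  obtain ⟨J, hJ⟩ := monotone_stabilizes_iff_noetherian.mpr inferInstance ⟨f, hmono⟩
  exact ⟨J, fun j hj => (hJ j hj).symm⟩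

theorem imchain_stabilizes (n : ℕ) (f : ℕ → Submodule W M)
    (hanti : ∀ j j', j ≤ j' → f j' ≤ f j) (hQ : ∀ j, QQ p k M n ≤ f j) :
    ∃ J, ∀ j, J ≤ j → f j = f J := by
  classical
  set I : Ideal W := Ideal.span {(p : W)} ^ n with hI
  have hQQ : QQ p k M n = (I • ⊤ : Submodule W M) := rfl
  rw [hQQ] at hQ
  haveI hart : IsArtinianRing (W ⧸ I) := isArtinianRing_quot n
  haveI : IsScalarTower W (W ⧸ I) (M ⧸ (I • ⊤ : Submodule W M)) :=
    (Module.isTorsionBySet_quotient_ideal_smul M I).isScalarTower (S := W)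
  haveI : Module.Finite (W ⧸ I) (M ⧸ (I • ⊤ : Submodule W M)) :=
    Module.Finite.of_restrictScalars_finite W _ _
  let mk := (I • ⊤ : Submodule W M).mkQ
  let g : ℕ → Submodule (W ⧸ I) (M ⧸ (I • ⊤ : Submodule W M)) := fun j =>
    { carrier := mk '' (f j : Set M)
      add_mem' := by
        rintro a b ⟨xa, hxa, rfl⟩ ⟨xb, hxb, rfl⟩
        exact ⟨xa + xb, Submodule.add_mem _ hxa hxb, map_add _ _ _⟩
      zero_mem' := ⟨0, Submodule.zero_mem _, map_zero _⟩
      smul_mem' := by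
        rintro c x ⟨xa, hxa, rfl⟩
        obtain ⟨cw, rfl⟩ := Ideal.Quotient.mk_surjective c
        refine ⟨cw • xa, Submodule.smul_mem _ _ hxa, ?_⟩
        rfl }
  have hganti : ∀ {j j'}, j ≤ j' → g j' ≤ g j := by
    intro j j' h x hx
    obtain ⟨xa, hxa, rfl⟩ := hx
    exact ⟨xa, hanti j j' h hxa, rfl⟩
  let F : ℕ →o (Submodule (W ⧸ I) (M ⧸ (I • ⊤ : Submodule W M)))ᵒᵈ :=
    ⟨fun j => OrderDual.toDual (g j), fun a b hab => hganti hab⟩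
  obtain ⟨J, hJ⟩ := monotone_stabilizes_iff_artinian.mpr inferInstance F
  refine ⟨J, fun j hj => ?_⟩
  have hg : g j = g J := (OrderDual.toDual.injective (hJ j hj)).symm
  have hmap : Submodule.map mk (f j) = Submodule.map mk (f J) := by
    apply SetLike.ext'
    rw [Submodule.map_coe, Submodule.map_coe]
    exact congrArg SetLike.coe hg
  calc f j = (I • ⊤ : Submodule W M) ⊔ f j := (sup_eq_right.mpr (hQ j)).symm
    _ = Submodule.comap mk (Submodule.map mk (f j)) := (Submodule.comap_map_mkQ _ _).symm
    _ = Submodule.comap mk (Submodule.map mk (f J)) := by rw [hmap]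
    _ = (I • ⊤ : Submodule W M) ⊔ f J := Submodule.comap_map_mkQ _ _
    _ = f J := sup_eq_right.mpr (hQ J)

end Stab
section Fitting

variable {p : ℕ} [hp : Fact p.Prime] {k : Type} [Field k] [CharP k p] [PerfectRing k p]
variable {M : Type} [AddCommGroup M] [Module (WittVector p k) M]

local notation "W" => WittVector p k

variable (φ : M →ₛₗ[(WittVector.frobenius : WittVector p k →+* WittVector p k)] M)

theorem mem_KerN {n j : ℕ} {x : M} : x ∈ KerN φ n j ↔ (⇑φ)^[j] x ∈ QQ p k M n := Iff.rfl

theorem mem_ImN {n j : ℕ} {x : M} :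
    x ∈ ImN φ n j ↔ ∃ y, x - (⇑φ)^[j] y ∈ QQ p k M n := Iff.rfl

theorem KerN_mono (n : ℕ) : Monotone (KerN φ n) := by
  intro j j' h x hx
  rw [mem_KerN] at *
  have he : (⇑φ)^[j'] x = (⇑φ)^[j' - j] ((⇑φ)^[j] x) := by
    rw [← Function.iterate_add_apply, Nat.sub_add_cancel h]
  rw [he]
  exact phi_iter_QQ φ _ _ hx

theorem ImN_anti (n : ℕ) {j j' : ℕ} (h : j ≤ j') : ImN φ n j' ≤ ImN φ n j := by
  rintro x ⟨y, hy⟩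
  refine ⟨(⇑φ)^[j' - j] y, ?_⟩
  rwa [← Function.iterate_add_apply, Nat.add_sub_cancel' h]

theorem QQ_le_KerN (n j : ℕ) : QQ p k M n ≤ KerN φ n j := fun _ hx => phi_iter_QQ φ j n hx

theorem QQ_le_ImN (n j : ℕ) : QQ p k M n ≤ ImN φ n j := fun x hx =>
  ⟨0, by rw [phi_iter_zero, sub_zero]; exact hx⟩

theorem KerN_anti_n {m n : ℕ} (h : m ≤ n) (j : ℕ) : KerN φ n j ≤ KerN φ m j :=
  fun _ hx => QQ_antitone h hx

theorem ImN_le_n {m n : ℕ} (h : m ≤ n) (j : ℕ) : ImN φ n j ≤ ImN φ m j := by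
  rintro x ⟨y, hy⟩
  exact ⟨y, QQ_antitone h hy⟩

variable [Module.Finite (WittVector p k) M]

theorem exists_stab (n : ℕ) : ∃ J, ∀ j, J ≤ j →
    (KerN φ n j = KerN φ n J ∧ ImN φ n j = ImN φ n J) := by
  obtain ⟨J₁, h₁⟩ := kerchain_stabilizes (KerN φ n) (KerN_mono φ n)
  obtain ⟨J₂, h₂⟩ := imchain_stabilizes n (ImN φ n) (fun j j' h => ImN_anti φ n h)
    (QQ_le_ImN φ n)
  refine ⟨max J₁ J₂, fun j hj => ⟨?_, ?_⟩⟩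
  · rw [h₁ j (le_trans (le_max_left _ _) hj), h₁ (max J₁ J₂) (le_max_left _ _)]
  · rw [h₂ j (le_trans (le_max_right _ _) hj), h₂ (max J₁ J₂) (le_max_right _ _)]

variable {n Jn : ℕ}
variable (hJ : ∀ j, Jn ≤ j → (KerN φ n j = KerN φ n Jn ∧ ImN φ n j = ImN φ n Jn))

include hJ

theorem fitting_decomp (x : M) : ∃ u ∈ ImN φ n Jn, x - u ∈ KerN φ n Jn := by
  have h1 : (⇑φ)^[Jn] x ∈ ImN φ n (Jn + Jn) := by
    rw [(hJ (Jn + Jn) (Nat.le_add_right _ _)).2]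
    exact ⟨x, by rw [sub_self]; exact Submodule.zero_mem _⟩
  obtain ⟨z, hz⟩ := h1
  refine ⟨(⇑φ)^[Jn] z, ⟨z, by rw [sub_self]; exact Submodule.zero_mem _⟩, ?_⟩
  show (⇑φ)^[Jn] (x - (⇑φ)^[Jn] z) ∈ QQ p k M n
  rw [phi_iter_sub, ← Function.iterate_add_apply]
  exact hz

theorem fitting_inter {x : M} (hx1 : x ∈ ImN φ n Jn) (hx2 : x ∈ KerN φ n Jn) :
    x ∈ QQ p k M n := by
  obtain ⟨y, hy⟩ := hx1
  have h2 : (⇑φ)^[Jn + Jn] y ∈ QQ p k M n := by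
    have h3 := phi_iter_QQ φ Jn n hy
    rw [phi_iter_sub, ← Function.iterate_add_apply] at h3
    have h5 := Submodule.sub_mem _ (mem_KerN φ |>.mp hx2) h3
    simpa using h5
  have h4 : y ∈ KerN φ n Jn := by
    rw [← (hJ (Jn + Jn) (Nat.le_add_right _ _)).1]
    exact h2
  have h6 := Submodule.add_mem _ hy (mem_KerN φ |>.mp h4)
  simpa using h6

theorem fitting_injmod {x : M} (hx : x ∈ ImN φ n Jn) (hphi : φ x ∈ QQ p k M n) :
    x ∈ QQ p k M n := by
  apply fitting_inter φ hJ hx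
  have h1 : x ∈ KerN φ n 1 := by
    show (⇑φ)^[1] x ∈ QQ p k M n
    simpa using hphi
  have h2 := KerN_mono φ n (show 1 ≤ Jn + 1 by omega) h1
  rwa [(hJ (Jn + 1) (Nat.le_succ _)).1] at h2

theorem fitting_surjmod {x : M} (hx : x ∈ ImN φ n Jn) :
    ∃ z ∈ ImN φ n Jn, x - φ z ∈ QQ p k M n := by
  rw [← (hJ (Jn + 1) (Nat.le_succ _)).2] at hx
  obtain ⟨y, hy⟩ := hx
  refine ⟨(⇑φ)^[Jn] y, ⟨y, by rw [sub_self]; exact Submodule.zero_mem _⟩, ?_⟩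
  rwa [Function.iterate_succ_apply' (⇑φ) Jn y] at hy
  
theorem ImN_phi_stable {x : M} (hx : x ∈ ImN φ n Jn) : φ x ∈ ImN φ n Jn := by
  obtain ⟨y, hy⟩ := hx
  have h := phi_iter_QQ φ 1 n hy
  rw [phi_iter_sub, ← Function.iterate_add_apply] at h
  have h2 : φ x ∈ ImN φ n (1 + Jn) := ⟨y, by simpa using h⟩
  rwa [(hJ (1 + Jn) (by omega)).2] at h2

end Fitting
/-- For a finite free module `M` over the Witt vectors `𝕎 k` of a perfect field
`k` of characteristic `p`, equipped with a Frobenius-semilinear endomorphism `φ`, `M` decomposes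
as a direct sum `M = M_unit ⊕ M_nil` of `φ`-stable submodules on which `φ` is respectively
bijective and topologically nilpotent (`φ^[K] (M_nil) ⊆ p^n M` for `K` large). -/
theorem witt_fitting_decomposition (p : ℕ) [Fact p.Prime]
    {k : Type} [Field k] [CharP k p] [PerfectRing k p]
    {M : Type} [AddCommGroup M] [Module (WittVector p k) M]
    [Module.Free (WittVector p k) M] [Module.Finite (WittVector p k) M]
    (φ : M →ₛₗ[(WittVector.frobenius : WittVector p k →+* WittVector p k)] M) :
    ∃ Munit Mnil : Submodule (WittVector p k) M,
      IsCompl Munit Mnil ∧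
      (∀ x ∈ Munit, φ x ∈ Munit) ∧
      (∀ x ∈ Mnil, φ x ∈ Mnil) ∧
      Set.BijOn ⇑φ (Munit : Set M) (Munit : Set M) ∧
      (∀ n : ℕ, ∃ K : ℕ, ∀ x ∈ Mnil,
        (⇑φ)^[K] x ∈ (Ideal.span {(p : WittVector p k)} ^ n • ⊤ : Submodule (WittVector p k) M)) := by
  classical
  set W := WittVector p k
  let b := Module.Free.chooseBasis W M
  choose J hJ using fun n => exists_stab φ n
  set U : Submodule W M := ⨅ n, ImN φ n (J n) with hU
  set Nl : Submodule W M := ⨅ n, KerN φ n (J n) with hNl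
  -- Krull intersection
  have hbot : ∀ x : M, (∀ n, x ∈ QQ p k M n) → x = 0 := by
    haveI dvr : IsDiscreteValuationRing W := WittVector.isDiscreteValuationRing
    have hne : Ideal.span {(p : W)} ≠ ⊤ := by
      intro h
      exact (WittVector.irreducible p).not_isUnit (Ideal.span_singleton_eq_top.mp h)
    have hKrull := Ideal.iInf_pow_smul_eq_bot_of_isLocalRing
      (I := Ideal.span {(p : W)}) (M := M) hne
    intro x hx
    have hmem : x ∈ (⨅ i : ℕ, Ideal.span {(p : W)} ^ i • ⊤ : Submodule W M) :=
      Submodule.mem_iInf _ |>.mpr fun i => hx i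
    rw [hKrull] at hmem
    simpa using hmem
  -- cross-level inclusions
  have hImle : ∀ n, ImN φ (n + 1) (J (n + 1)) ≤ ImN φ n (J n) := by
    intro n
    calc ImN φ (n + 1) (J (n + 1)) = ImN φ (n + 1) (max (J n) (J (n + 1))) :=
          ((hJ (n + 1) _ (le_max_right _ _)).2).symm
      _ ≤ ImN φ n (max (J n) (J (n + 1))) := ImN_le_n φ (Nat.le_succ n) _
      _ = ImN φ n (J n) := (hJ n _ (le_max_left _ _)).2
  have hKerle : ∀ n, KerN φ (n + 1) (J (n + 1)) ≤ KerN φ n (J n) := by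
    intro n
    calc KerN φ (n + 1) (J (n + 1)) = KerN φ (n + 1) (max (J n) (J (n + 1))) :=
          ((hJ (n + 1) _ (le_max_right _ _)).1).symm
      _ ≤ KerN φ n (max (J n) (J (n + 1))) := KerN_anti_n φ (Nat.le_succ n) _
      _ = KerN φ n (J n) := (hJ n _ (le_max_left _ _)).1
  -- membership in U / Nl unfolded
  have hmemU : ∀ x : M, x ∈ U ↔ ∀ n, x ∈ ImN φ n (J n) := fun x => Submodule.mem_iInf _
  have hmemN : ∀ x : M, x ∈ Nl ↔ ∀ n, x ∈ KerN φ n (J n) := fun x => Submodule.mem_iInf _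
  -- a helper : anything in QQ n is in both level-n pieces
  -- φ stability
  have hUstab : ∀ x ∈ U, φ x ∈ U := by
    intro x hx
    rw [hmemU] at hx ⊢
    exact fun n => ImN_phi_stable φ (hJ n) (hx n)
  have hNstab : ∀ x ∈ Nl, φ x ∈ Nl := by
    intro x hx
    rw [hmemN] at hx ⊢
    intro n
    show (⇑φ)^[J n] (φ x) ∈ QQ p k M n
    rw [← Function.iterate_succ_apply]
    exact KerN_mono φ n (Nat.le_succ _) (hx n)
  -- telescoping helper
  have htel : ∀ u : ℕ → M, (∀ m, u (m + 1) - u m ∈ QQ p k M m) →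
      ∀ j ℓ, j ≤ ℓ → u ℓ - u j ∈ QQ p k M j := by
    intro u hu j ℓ hjl
    induction ℓ with
    | zero =>
      have : j = 0 := Nat.le_zero.mp hjl
      subst this
      rw [sub_self]; exact Submodule.zero_mem _
    | succ ℓ ih =>
      rcases Nat.lt_or_ge j (ℓ + 1) with hlt | hge
      · have hjle : j ≤ ℓ := by omega
        have h1 := ih hjle
        have h2 : u (ℓ + 1) - u ℓ ∈ QQ p k M j := QQ_antitone hjle (hu ℓ)
        have := Submodule.add_mem _ h2 h1
        simpa using this
      · have : j = ℓ + 1 := by omega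
        subst this
        rw [sub_self]; exact Submodule.zero_mem _
  -- disjointness
  have hdisj : Disjoint U Nl := by
    rw [Submodule.disjoint_def]
    intro x hxU hxN
    refine hbot x fun n => ?_
    exact fitting_inter φ (hJ n) ((hmemU x).mp hxU n) ((hmemN x).mp hxN n)
  -- codisjointness
  have hcodisj : Codisjoint U Nl := by
    rw [codisjoint_iff]
    rw [Submodule.eq_top_iff']
    intro x
    have hdec := fun n => fitting_decomp φ (hJ n) x
    choose u hu1 hu2 using hdec
    have hcoh : ∀ m, u (m + 1) - u m ∈ QQ p k M m := by
      intro m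
      apply fitting_inter φ (hJ m)
      · exact Submodule.sub_mem _ (hImle m (hu1 (m + 1))) (hu1 m)
      · have h1 : u (m + 1) - u m = (x - u m) - (x - u (m + 1)) := by abel
        rw [h1]
        exact Submodule.sub_mem _ (hu2 m) (hKerle m (hu2 (m + 1)))
    obtain ⟨L, hL⟩ := WF_exists_limit b u (htel u hcoh)
    have hLU : L ∈ U := by
      rw [hmemU]
      intro n
      have := Submodule.add_mem _ (hu1 n) (QQ_le_ImN φ n (J n) (hL n))
      simpa using this
    have hxL : x - L ∈ Nl := by
      rw [hmemN]
      intro n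
      have h1 : x - L = (x - u n) - (L - u n) := by abel
      rw [h1]
      exact Submodule.sub_mem _ (hu2 n) (QQ_le_KerN φ n (J n) (hL n))
    exact Submodule.mem_sup.mpr ⟨L, hLU, x - L, hxL, by abel⟩
  refine ⟨U, Nl, ⟨hdisj, hcodisj⟩, hUstab, hNstab, ⟨?_, ?_, ?_⟩, ?_⟩
  · -- MapsTo
    intro x hx
    exact hUstab x hx
  · -- InjOn
    intro x hx y hy hxy
    have hz : x - y ∈ U := Submodule.sub_mem _ hx hy
    have hz0 : ∀ n, x - y ∈ QQ p k M n := by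
      intro n
      apply fitting_injmod φ (hJ n) ((hmemU _).mp hz n)
      rw [map_sub, hxy, sub_self]
      exact Submodule.zero_mem _
    have := hbot _ hz0
    exact sub_eq_zero.mp this
  · -- SurjOn
    intro y hy
    have hy' : ∀ n, y ∈ ImN φ n (J n) := (hmemU y).mp hy
    have hsur := fun n => fitting_surjmod φ (hJ n) (hy' n)
    choose z hz1 hz2 using hsur
    have hcoh : ∀ m, z (m + 1) - z m ∈ QQ p k M m := by
      intro m
      apply fitting_injmod φ (hJ m)
      · exact Submodule.sub_mem _ (hImle m (hz1 (m + 1))) (hz1 m)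
      · have h1 : φ (z (m + 1) - z m) = (y - φ (z m)) - (y - φ (z (m + 1))) := by
          rw [map_sub]; abel
        rw [h1]
        exact Submodule.sub_mem _ (hz2 m) (QQ_antitone (Nat.le_succ m) (hz2 (m + 1)))
    obtain ⟨x, hx⟩ := WF_exists_limit b z (htel z hcoh)
    have hxU : x ∈ U := by
      rw [hmemU]
      intro n
      have := Submodule.add_mem _ (hz1 n) (QQ_le_ImN φ n (J n) (hx n))
      simpa using this
    have hφx : φ x = y := by
      have hsubmem : ∀ n, φ x - y ∈ QQ p k M n := by
        intro n
        have h1 : φ (x - z n) ∈ QQ p k M n := by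
          have := phi_iter_QQ φ 1 n (hx n)
          simpa using this
        have h2 : φ x - y = φ (x - z n) - (y - φ (z n)) := by
          rw [map_sub]; abel
        rw [h2]
        exact Submodule.sub_mem _ h1 (hz2 n)
      exact sub_eq_zero.mp (hbot _ hsubmem)
    exact ⟨x, hxU, hφx⟩
  · -- topological nilpotence
    intro n
    refine ⟨J n, fun x hx => ?_⟩
    exact (hmemN x).mp hx n
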